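/- In ℝ² with the Euclidean norm, let R_θ denote rotation about the origin by angle θ, acting as R_θ(u) = (cos θ·u₁ − sin θ·u₂, sin θ·u₁ + cos θ·u₂). Define p₁ := ( (√5 − √(4−√5))/4 , (√(5+2√5) − √(2+3/√5))/4 ), p₁' := (0, √((5+√5)/10)), q₁' := ( (1+√5)/8 , √(10 + 22/√5)/8 ), and for k ≥ 1 set p_k := R_{2π(k−1)/5}(p₁) and p_k' := R_{2π(k−1)/5}(p₁'). For vectors u, w ∈ ℝ² let [u w] be the 2×2 matrix with columns u and w, and define M₀ := (‖p₁'‖/‖p₁‖)·R_{π/5} (as a linear map), M₁ := [p₄'−p₃', p₁'−p₃'] · [p₁−p₂, p₁'−p₂]⁻¹, and M₂ := [p₅'−p₄', p₁'−p₄'] · [q₁'−p₁, p₁'−p₁]⁻¹. Then for every v ∈ ℝ² and each i ∈ {0,1,2}, ‖M_i · v‖ ≤ 3.40 · ‖v‖. -/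

import Mathlib

noncomputable section

open Real

/-- The rotation matrix about the origin by angle `θ`. -/
def rotMat (θ : ℝ) : Matrix (Fin 2) (Fin 2) ℝ :=
  !![cos θ, -sin θ; sin θ, cos θ]

/-- `colMat u v` is the 2×2 real matrix whose first column is `u` and
whose second column is `v`. -/
def colMat (u v : EuclideanSpace ℝ (Fin 2)) : Matrix (Fin 2) (Fin 2) ℝ :=
  Matrix.of fun i j => ![u, v] j i

/-- The point `p₁` of the partition of the regular unit pentagon. -/
def pPt (k : ℕ) : EuclideanSpace ℝ (Fin 2) :=
  Matrix.toEuclideanLin (rotMat (2 * π * ((k - 1 : ℕ) : ℝ) / 5))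
    (WithLp.toLp 2 ![(sqrt 5 - sqrt (4 - sqrt 5)) / 4,
      (sqrt (5 + 2 * sqrt 5) - sqrt (2 + 3 / sqrt 5)) / 4])

/-- The points `p₁', p₂', …` of the partition of the regular unit pentagon. -/
def pPt' (k : ℕ) : EuclideanSpace ℝ (Fin 2) :=
  Matrix.toEuclideanLin (rotMat (2 * π * ((k - 1 : ℕ) : ℝ) / 5))
    (WithLp.toLp 2 ![0, sqrt ((5 + sqrt 5) / 10)])

/-- The point `q₁'` of the partition of the regular unit pentagon. -/
def qPt' : EuclideanSpace ℝ (Fin 2) :=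
  WithLp.toLp 2 ![(1 + sqrt 5) / 8, sqrt (10 + 22 / sqrt 5) / 8]

/-- The matrix mapping the small blue pentagon onto the large blue pentagon. -/
def M0 : Matrix (Fin 2) (Fin 2) ℝ :=
  (‖pPt' 1‖ / ‖pPt 1‖) • rotMat (π / 5)

/-- The matrix mapping the small orange triangle onto the large orange triangle. -/
def M1 : Matrix (Fin 2) (Fin 2) ℝ :=
  colMat (pPt' 4 - pPt' 3) (pPt' 1 - pPt' 3) * (colMat (pPt 1 - pPt 2) (pPt' 1 - pPt 2))⁻¹

/-- The matrix mapping the small yellow triangle onto the large yellow triangle. -/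
def M2 : Matrix (Fin 2) (Fin 2) ℝ :=
  colMat (pPt' 5 - pPt' 4) (pPt' 1 - pPt' 4) * (colMat (qPt' - pPt 1) (pPt' 1 - pPt 1))⁻¹

/-! ### Auxiliary material -/

local notation "S5" => Real.sqrt 5
local notation "SA" => Real.sqrt (4 - Real.sqrt 5)
local notation "SB" => Real.sqrt (5 + 2 * Real.sqrt 5)
local notation "SC" => Real.sqrt (2 + 3 / Real.sqrt 5)
local notation "SD" => Real.sqrt ((5 + Real.sqrt 5) / 10)
local notation "SE" => Real.sqrt (10 + 22 / Real.sqrt 5)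
local notation "SF" => Real.sqrt (10 + 2 * Real.sqrt 5)
local notation "SG" => Real.sqrt (10 - 2 * Real.sqrt 5)

private lemma le_of_sq_le' (t r : ℝ) (ht : 0 ≤ t) (hr : 0 ≤ r) (h : t^2 ≤ r^2) : t ≤ r := by
  nlinarith

private lemma sqrt_le_num (a r : ℝ) (hr : 0 ≤ r) (h : a ≤ r^2) : Real.sqrt a ≤ r := by
  refine le_of_sq_le' _ _ (Real.sqrt_nonneg _) hr ?_
  rcases le_or_gt a 0 with h0 | h0
  · rw [Real.sqrt_eq_zero'.2 h0]; nlinarith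
  · rw [Real.sq_sqrt h0.le]; exact h

private lemma num_le_sqrt (a r : ℝ) (hr : 0 ≤ r) (h : r^2 ≤ a) : r ≤ Real.sqrt a := by
  refine le_of_sq_le' _ _ hr (Real.sqrt_nonneg _) ?_
  rw [Real.sq_sqrt (by nlinarith : (0:ℝ) ≤ a)]; exact h

private lemma sin_pi_div_five' : sin (π/5) = SG / 4 := by
  have h1 : sin (π/5) = Real.sqrt (1 - cos (π/5)^2) := by
    rw [Real.sin_eq_sqrt_one_sub_cos_sq]
    · positivity
    · nlinarith [pi_pos]
  have h5 : (S5)^2 = 5 := Real.sq_sqrt (by norm_num)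
  rw [h1, Real.cos_pi_div_five,
    show (1:ℝ) - ((1+S5)/4)^2 = (10 - 2*S5)/4^2 by nlinarith,
    Real.sqrt_div (by nlinarith [sqrt_le_num 5 3 (by norm_num) (by norm_num)] :
      (0:ℝ) ≤ 10 - 2*S5), Real.sqrt_sq (by norm_num : (0:ℝ) ≤ 4)]

private lemma cos_two_pi_div_five' : cos (2*(π/5)) = (S5 - 1)/4 := by
  rw [cos_two_mul, Real.cos_pi_div_five]
  have h5 : (S5)^2 = 5 := Real.sq_sqrt (by norm_num)
  nlinarith

private lemma sin_two_pi_div_five' : sin (2*(π/5)) = SF / 4 := by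
  have h1 : sin (2*(π/5)) = Real.sqrt (1 - cos (2*(π/5))^2) := by
    rw [Real.sin_eq_sqrt_one_sub_cos_sq]
    · positivity
    · nlinarith [pi_pos]
  have h5 : (S5)^2 = 5 := Real.sq_sqrt (by norm_num)
  rw [h1, cos_two_pi_div_five',
    show (1:ℝ) - ((S5 - 1)/4)^2 = (10 + 2*S5)/4^2 by nlinarith,
    Real.sqrt_div (by nlinarith [Real.sqrt_nonneg 5] : (0:ℝ) ≤ 10 + 2*S5),
    Real.sqrt_sq (by norm_num : (0:ℝ) ≤ 4)]

private lemma toLin_apply (M : Matrix (Fin 2) (Fin 2) ℝ) (v : EuclideanSpace ℝ (Fin 2))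
    (i : Fin 2) : Matrix.toEuclideanLin M v i = M i 0 * v 0 + M i 1 * v 1 := by
  fin_cases i <;> simp [Matrix.toEuclideanLin_apply, Matrix.mulVec, dotProduct, Fin.sum_univ_two]

/-! ### Components of the points -/

private lemma pPt1_0 : pPt 1 0 = (S5 - SA)/4 := by
  have h : ((1 - 1 : ℕ) : ℝ) = 0 := by norm_num
  simp only [pPt, h, show 2 * π * (0:ℝ) / 5 = 0 by ring]
  rw [toLin_apply]
  simp only [rotMat, Matrix.cons_val', Matrix.cons_val_zero, Matrix.cons_val_one,
    Matrix.head_cons, Matrix.head_fin_const, Matrix.empty_val', Matrix.cons_val_fin_one,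
    Matrix.of_apply, PiLp.toLp_apply, Real.cos_zero, Real.sin_zero]
  try ring

private lemma pPt1_1 : pPt 1 1 = (SB - SC)/4 := by
  have h : ((1 - 1 : ℕ) : ℝ) = 0 := by norm_num
  simp only [pPt, h, show 2 * π * (0:ℝ) / 5 = 0 by ring]
  rw [toLin_apply]
  simp only [rotMat, Matrix.cons_val', Matrix.cons_val_zero, Matrix.cons_val_one,
    Matrix.head_cons, Matrix.head_fin_const, Matrix.empty_val', Matrix.cons_val_fin_one,
    Matrix.of_apply, PiLp.toLp_apply, Real.cos_zero, Real.sin_zero]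
  try ring

private lemma pPt2_0 : pPt 2 0 = (S5-1)/4 * ((S5 - SA)/4) - SF/4 * ((SB - SC)/4) := by
  have h : ((2 - 1 : ℕ) : ℝ) = 1 := by norm_num
  simp only [pPt, h, show 2 * π * (1:ℝ) / 5 = 2*(π/5) by ring]
  rw [toLin_apply]
  simp only [rotMat, Matrix.cons_val', Matrix.cons_val_zero, Matrix.cons_val_one,
    Matrix.head_cons, Matrix.head_fin_const, Matrix.empty_val', Matrix.cons_val_fin_one,
    Matrix.of_apply, PiLp.toLp_apply]
  rw [cos_two_pi_div_five', sin_two_pi_div_five']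
  try ring

private lemma pPt2_1 : pPt 2 1 = SF/4 * ((S5 - SA)/4) + (S5-1)/4 * ((SB - SC)/4) := by
  have h : ((2 - 1 : ℕ) : ℝ) = 1 := by norm_num
  simp only [pPt, h, show 2 * π * (1:ℝ) / 5 = 2*(π/5) by ring]
  rw [toLin_apply]
  simp only [rotMat, Matrix.cons_val', Matrix.cons_val_zero, Matrix.cons_val_one,
    Matrix.head_cons, Matrix.head_fin_const, Matrix.empty_val', Matrix.cons_val_fin_one,
    Matrix.of_apply, PiLp.toLp_apply]
  rw [cos_two_pi_div_five', sin_two_pi_div_five']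
  try ring

private lemma pPt'1_0 : pPt' 1 0 = 0 := by
  have h : ((1 - 1 : ℕ) : ℝ) = 0 := by norm_num
  simp only [pPt', h, show 2 * π * (0:ℝ) / 5 = 0 by ring]
  rw [toLin_apply]
  simp only [rotMat, Matrix.cons_val', Matrix.cons_val_zero, Matrix.cons_val_one,
    Matrix.head_cons, Matrix.head_fin_const, Matrix.empty_val', Matrix.cons_val_fin_one,
    Matrix.of_apply, PiLp.toLp_apply, Real.cos_zero, Real.sin_zero]
  try ring

private lemma pPt'1_1 : pPt' 1 1 = SD := by
  have h : ((1 - 1 : ℕ) : ℝ) = 0 := by norm_num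
  simp only [pPt', h, show 2 * π * (0:ℝ) / 5 = 0 by ring]
  rw [toLin_apply]
  simp only [rotMat, Matrix.cons_val', Matrix.cons_val_zero, Matrix.cons_val_one,
    Matrix.head_cons, Matrix.head_fin_const, Matrix.empty_val', Matrix.cons_val_fin_one,
    Matrix.of_apply, PiLp.toLp_apply, Real.cos_zero, Real.sin_zero]
  try ring

private lemma pPt'3_0 : pPt' 3 0 = -(SG/4 * SD) := by
  have h : ((3 - 1 : ℕ) : ℝ) = 2 := by norm_num
  simp only [pPt', h, show 2 * π * (2:ℝ) / 5 = π - π/5 by ring]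
  rw [toLin_apply]
  simp only [rotMat, Matrix.cons_val', Matrix.cons_val_zero, Matrix.cons_val_one,
    Matrix.head_cons, Matrix.head_fin_const, Matrix.empty_val', Matrix.cons_val_fin_one,
    Matrix.of_apply, PiLp.toLp_apply]
  rw [Real.cos_pi_sub, Real.sin_pi_sub, sin_pi_div_five']
  try ring

private lemma pPt'3_1 : pPt' 3 1 = -((1+S5)/4 * SD) := by
  have h : ((3 - 1 : ℕ) : ℝ) = 2 := by norm_num
  simp only [pPt', h, show 2 * π * (2:ℝ) / 5 = π - π/5 by ring]
  rw [toLin_apply]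
  simp only [rotMat, Matrix.cons_val', Matrix.cons_val_zero, Matrix.cons_val_one,
    Matrix.head_cons, Matrix.head_fin_const, Matrix.empty_val', Matrix.cons_val_fin_one,
    Matrix.of_apply, PiLp.toLp_apply]
  rw [Real.cos_pi_sub, Real.sin_pi_sub, Real.cos_pi_div_five]
  try ring

private lemma pPt'4_0 : pPt' 4 0 = SG/4 * SD := by
  have h : ((4 - 1 : ℕ) : ℝ) = 3 := by norm_num
  simp only [pPt', h, show 2 * π * (3:ℝ) / 5 = π + π/5 by ring]
  rw [toLin_apply]
  simp only [rotMat, Matrix.cons_val', Matrix.cons_val_zero, Matrix.cons_val_one,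
    Matrix.head_cons, Matrix.head_fin_const, Matrix.empty_val', Matrix.cons_val_fin_one,
    Matrix.of_apply, PiLp.toLp_apply]
  rw [Real.cos_add, Real.sin_add, Real.cos_pi, Real.sin_pi, sin_pi_div_five']
  try ring

private lemma pPt'4_1 : pPt' 4 1 = -((1+S5)/4 * SD) := by
  have h : ((4 - 1 : ℕ) : ℝ) = 3 := by norm_num
  simp only [pPt', h, show 2 * π * (3:ℝ) / 5 = π + π/5 by ring]
  rw [toLin_apply]
  simp only [rotMat, Matrix.cons_val', Matrix.cons_val_zero, Matrix.cons_val_one,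
    Matrix.head_cons, Matrix.head_fin_const, Matrix.empty_val', Matrix.cons_val_fin_one,
    Matrix.of_apply, PiLp.toLp_apply]
  rw [Real.cos_add, Real.sin_add, Real.cos_pi, Real.sin_pi, Real.cos_pi_div_five]
  try ring

private lemma pPt'5_0 : pPt' 5 0 = SF/4 * SD := by
  have h : ((5 - 1 : ℕ) : ℝ) = 4 := by norm_num
  simp only [pPt', h, show 2 * π * (4:ℝ) / 5 = 2*π - 2*(π/5) by ring]
  rw [toLin_apply]
  simp only [rotMat, Matrix.cons_val', Matrix.cons_val_zero, Matrix.cons_val_one,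
    Matrix.head_cons, Matrix.head_fin_const, Matrix.empty_val', Matrix.cons_val_fin_one,
    Matrix.of_apply, PiLp.toLp_apply]
  rw [Real.cos_sub, Real.sin_sub, Real.cos_two_pi, Real.sin_two_pi, sin_two_pi_div_five']
  try ring

private lemma pPt'5_1 : pPt' 5 1 = (S5-1)/4 * SD := by
  have h : ((5 - 1 : ℕ) : ℝ) = 4 := by norm_num
  simp only [pPt', h, show 2 * π * (4:ℝ) / 5 = 2*π - 2*(π/5) by ring]
  rw [toLin_apply]
  simp only [rotMat, Matrix.cons_val', Matrix.cons_val_zero, Matrix.cons_val_one,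
    Matrix.head_cons, Matrix.head_fin_const, Matrix.empty_val', Matrix.cons_val_fin_one,
    Matrix.of_apply, PiLp.toLp_apply]
  rw [Real.cos_sub, Real.sin_sub, Real.cos_two_pi, Real.sin_two_pi, cos_two_pi_div_five']
  try ring

private lemma qPt'_0 : qPt' 0 = (1 + S5)/8 := by simp [qPt']
private lemma qPt'_1 : qPt' 1 = SE/8 := by simp [qPt']

/-! ### Matrix assembly -/

private lemma assemble (Am Bm : Matrix (Fin 2) (Fin 2) ℝ) (a00 a01 a10 a11 b00 b01 b10 b11 : ℝ)
    (hA : Am = !![a00,a01;a10,a11]) (hB : Bm = !![b00,b01;b10,b11]) :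
    Am * Bm⁻¹ = (b00*b11 - b01*b10)⁻¹ •
      !![a00*b11 - a01*b10, a01*b00 - a00*b01; a10*b11 - a11*b10, a11*b00 - a10*b01] := by
  subst hA hB
  rw [Matrix.inv_def, Matrix.adjugate_fin_two_of, Matrix.det_fin_two_of, Ring.inverse_eq_inv,
    Matrix.mul_smul]
  congr 1
  ext i j
  fin_cases i <;> fin_cases j <;>
    simp [Matrix.mul_apply, Fin.sum_univ_two] <;> ring

private lemma euc_norm (x : EuclideanSpace ℝ (Fin 2)) : ‖x‖ = Real.sqrt (x 0^2 + x 1^2) := by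
  rw [EuclideanSpace.norm_eq]
  simp [Fin.sum_univ_two, sq_abs]

private lemma sqrt_le_mul_sqrt (X Y K T : ℝ) (hK : 0 ≤ K) (h : X^2 + Y^2 ≤ K^2*T) :
    Real.sqrt (X^2+Y^2) ≤ K * Real.sqrt T := by
  rw [show K*Real.sqrt T = Real.sqrt (K^2*T) by
    rw [Real.sqrt_mul (sq_nonneg K), Real.sqrt_sq hK]]
  exact Real.sqrt_le_sqrt h

private lemma opnorm_bound (M : Matrix (Fin 2) (Fin 2) ℝ) (n00 n01 n10 n11 d : ℝ)
    (hM : M = d⁻¹ • !![n00,n01;n10,n11]) (hd : 0 < d)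
    (h : ∀ v0 v1 : ℝ, (n00*v0+n01*v1)^2 + (n10*v0+n11*v1)^2 ≤ (3.40:ℝ)^2*d^2*(v0^2+v1^2)) :
    ∀ v : EuclideanSpace ℝ (Fin 2), ‖Matrix.toEuclideanLin M v‖ ≤ 3.40 * ‖v‖ := by
  intro v
  have h0 : Matrix.toEuclideanLin M v 0 = d⁻¹ * (n00 * v 0 + n01 * v 1) := by
    rw [hM, toLin_apply]
    simp only [Matrix.smul_apply, Matrix.cons_val', Matrix.cons_val_zero, Matrix.cons_val_one,
      Matrix.head_cons, Matrix.head_fin_const, Matrix.empty_val', Matrix.cons_val_fin_one,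
      Matrix.of_apply, smul_eq_mul]
    ring
  have h1 : Matrix.toEuclideanLin M v 1 = d⁻¹ * (n10 * v 0 + n11 * v 1) := by
    rw [hM, toLin_apply]
    simp only [Matrix.smul_apply, Matrix.cons_val', Matrix.cons_val_zero, Matrix.cons_val_one,
      Matrix.head_cons, Matrix.head_fin_const, Matrix.empty_val', Matrix.cons_val_fin_one,
      Matrix.of_apply, smul_eq_mul]
    ring
  rw [euc_norm, euc_norm, h0, h1]
  have key := h (v 0) (v 1)
  have hd2 : (0:ℝ) < d^2 := by positivity
  refine sqrt_le_mul_sqrt _ _ _ _ (by norm_num) ?_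
  have e : (d⁻¹*(n00*v 0+n01*v 1))^2 + (d⁻¹*(n10*v 0+n11*v 1))^2
      = ((n00*v 0+n01*v 1)^2 + (n10*v 0+n11*v 1)^2)/d^2 := by
    field_simp
  rw [e, div_le_iff₀ hd2]
  nlinarith [key]

private lemma quad_le (n00 n01 n10 n11 d p0 q0 v0 v1 : ℝ)
    (hp : 0 < p0) (hq : 0 < q0)
    (hP : p0 ≤ (3.40:ℝ)^2*d^2 - (n00^2+n10^2))
    (hQ : q0 ≤ (3.40:ℝ)^2*d^2 - (n01^2+n11^2))
    (hR : (n00*n01+n10*n11)^2 ≤ p0*q0) :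
    (n00*v0+n01*v1)^2 + (n10*v0+n11*v1)^2 ≤ (3.40:ℝ)^2*d^2*(v0^2+v1^2) := by
  nlinarith [sq_nonneg (p0*v0 - (n00*n01+n10*n11)*v1), sq_nonneg v0, sq_nonneg v1,
    mul_nonneg (sq_nonneg v1) (sub_nonneg.2 hR),
    mul_nonneg (mul_nonneg hp.le (sq_nonneg v0)) (sub_nonneg.2 hP),
    mul_nonneg (mul_nonneg hp.le (sq_nonneg v1)) (sub_nonneg.2 hQ), hp.le, hq.le]

private lemma opnorm_rot (M : Matrix (Fin 2) (Fin 2) ℝ) (r θ : ℝ)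
    (hM : M = r • rotMat θ) (hr0 : 0 ≤ r) (hr : r ≤ 3.40) :
    ∀ v : EuclideanSpace ℝ (Fin 2), ‖Matrix.toEuclideanLin M v‖ ≤ 3.40 * ‖v‖ := by
  intro v
  have h0 : Matrix.toEuclideanLin M v 0 = r * (cos θ * v 0 - sin θ * v 1) := by
    rw [hM, toLin_apply]
    simp only [rotMat, Matrix.smul_apply, Matrix.cons_val', Matrix.cons_val_zero,
      Matrix.cons_val_one, Matrix.head_cons, Matrix.head_fin_const, Matrix.empty_val',
      Matrix.cons_val_fin_one, Matrix.of_apply, smul_eq_mul]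
    ring
  have h1 : Matrix.toEuclideanLin M v 1 = r * (sin θ * v 0 + cos θ * v 1) := by
    rw [hM, toLin_apply]
    simp only [rotMat, Matrix.smul_apply, Matrix.cons_val', Matrix.cons_val_zero,
      Matrix.cons_val_one, Matrix.head_cons, Matrix.head_fin_const, Matrix.empty_val',
      Matrix.cons_val_fin_one, Matrix.of_apply, smul_eq_mul]
    ring
  rw [euc_norm, euc_norm, h0, h1]
  refine sqrt_le_mul_sqrt _ _ _ _ (by norm_num) ?_
  have hcs := Real.sin_sq_add_cos_sq θ
  have e : (r * (cos θ * v 0 - sin θ * v 1))^2 + (r * (sin θ * v 0 + cos θ * v 1))^2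
      = r^2 * (v 0^2 + v 1^2) := by
    linear_combination (r^2*(v 0^2+v 1^2))*hcs
  nlinarith [e, mul_nonneg (mul_nonneg (sub_nonneg.2 hr) (by linarith : (0:ℝ) ≤ 3.40 + r))
    (by positivity : (0:ℝ) ≤ v 0^2 + v 1^2)]

/-! ### Numeric estimates for `M₁` -/

private lemma M1b (s f D x y : ℝ)
    (hs1 : 2.23606797 ≤ s) (hs2 : s ≤ 2.23606798) (hf1 : 3.80422606 ≤ f) (hf2 : f ≤ 3.80422607) (hD1 : 0.8506508 ≤ D) (hD2 : D ≤ 0.85065081) (hx1 : 0.2269842 ≤ x) (hx2 : x ≤ 0.2269843) (hy1 : 0.3124169 ≤ y) (hy2 : y ≤ 0.3124171) :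
    0.4539683 ≤ x*(1-(s-1)/4) + f/4*y ∧ x*(1-(s-1)/4) + f/4*y ≤ 0.4539687 ∧ 0.2269841 ≤ f/4*y - (s-1)/4*x ∧ f/4*y - (s-1)/4*x ≤ 0.2269844 ∧ -2e-07 ≤ y*(1-(s-1)/4) - f/4*x ∧ y*(1-(s-1)/4) - f/4*x ≤ 2e-07 ∧ 0.5382337 ≤ D - (f/4*x + (s-1)/4*y) ∧ D - (f/4*x + (s-1)/4*y) ≤ 0.5382339 := by
  refine ⟨?_, ?_, ?_, ?_, ?_, ?_, ?_, ?_⟩ <;> nlinarith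

private lemma M1a (s g D : ℝ)
    (hs1 : 2.23606797 ≤ s) (hs2 : s ≤ 2.23606798) (hg1 : 2.351141 ≤ g) (hg2 : g ≤ 2.35114102) (hD1 : 0.8506508 ≤ D) (hD2 : D ≤ 0.85065081) :
    0.9999999 ≤ g*D/2 ∧ g*D/2 ≤ 1.0000001 ∧ 0.4999999 ≤ g*D/4 ∧ g*D/4 ≤ 0.5000001 ∧ 1.5388417 ≤ (5+s)*D/4 ∧ (5+s)*D/4 ≤ 1.5388418 := by
  refine ⟨?_, ?_, ?_, ?_, ?_, ?_⟩ <;> nlinarith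

private lemma M1n00 (a00 a01 b10 b11 : ℝ)
    (ha001 : 0.9999999 ≤ a00) (ha002 : a00 ≤ 1.0000001) (ha011 : 0.4999999 ≤ a01) (ha012 : a01 ≤ 0.5000001) (hb101 : -2e-07 ≤ b10) (hb102 : b10 ≤ 2e-07) (hb111 : 0.5382337 ≤ b11) (hb112 : b11 ≤ 0.5382339) :
    0.5382335 ≤ a00*b11 - a01*b10 ∧ a00*b11 - a01*b10 ≤ 0.5382341 := by
  refine ⟨?_, ?_⟩ <;> nlinarith

private lemma M1n01 (a00 a01 b00 b01 : ℝ)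
    (ha001 : 0.9999999 ≤ a00) (ha002 : a00 ≤ 1.0000001) (ha011 : 0.4999999 ≤ a01) (ha012 : a01 ≤ 0.5000001) (hb001 : 0.4539683 ≤ b00) (hb002 : b00 ≤ 0.4539687) (hb011 : 0.2269841 ≤ b01) (hb012 : b01 ≤ 0.2269844) :
    -4e-07 ≤ a01*b00 - a00*b01 ∧ a01*b00 - a00*b01 ≤ 4e-07 := by
  refine ⟨?_, ?_⟩ <;> nlinarith

private lemma M1n10 (a11 b10 b11 : ℝ)
    (ha111 : 1.5388417 ≤ a11) (ha112 : a11 ≤ 1.5388418) (hb101 : -2e-07 ≤ b10) (hb102 : b10 ≤ 2e-07) (hb111 : 0.5382337 ≤ b11) (hb112 : b11 ≤ 0.5382339) :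
    -4e-07 ≤ 0*b11 - a11*b10 ∧ 0*b11 - a11*b10 ≤ 4e-07 := by
  refine ⟨?_, ?_⟩ <;> nlinarith

private lemma M1n11 (a11 b00 b01 : ℝ)
    (ha111 : 1.5388417 ≤ a11) (ha112 : a11 ≤ 1.5388418) (hb001 : 0.4539683 ≤ b00) (hb002 : b00 ≤ 0.4539687) (hb011 : 0.2269841 ≤ b01) (hb012 : b01 ≤ 0.2269844) :
    0.6985853 ≤ a11*b00 - 0*b01 ∧ a11*b00 - 0*b01 ≤ 0.6985861 := by
  refine ⟨?_, ?_⟩ <;> nlinarith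

private lemma M1d (b00 b01 b10 b11 : ℝ)
    (hb001 : 0.4539683 ≤ b00) (hb002 : b00 ≤ 0.4539687) (hb011 : 0.2269841 ≤ b01) (hb012 : b01 ≤ 0.2269844) (hb101 : -2e-07 ≤ b10) (hb102 : b10 ≤ 2e-07) (hb111 : 0.5382337 ≤ b11) (hb112 : b11 ≤ 0.5382339) :
    0.2443409 ≤ b00*b11 - b01*b10 ∧ b00*b11 - b01*b10 ≤ 0.2443414 := by
  refine ⟨?_, ?_⟩ <;> nlinarith

private lemma M2b (s e D x y : ℝ)
    (hs1 : 2.23606797 ≤ s) (hs2 : s ≤ 2.23606798) (he1 : 4.45406545 ≤ e) (he2 : e ≤ 4.45406546) (hD1 : 0.8506508 ≤ D) (hD2 : D ≤ 0.85065081) (hx1 : 0.2269842 ≤ x) (hx2 : x ≤ 0.2269843) (hy1 : 0.3124169 ≤ y) (hy2 : y ≤ 0.3124171) :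
    0.1775241 ≤ (1+s)/8 - x ∧ (1+s)/8 - x ≤ 0.1775243 ∧ -0.2269843 ≤ -x ∧ -x ≤ -0.2269842 ∧ 0.244341 ≤ e/8 - y ∧ e/8 - y ≤ 0.2443413 ∧ 0.5382337 ≤ D - y ∧ D - y ≤ 0.538234 := by
  refine ⟨?_, ?_, ?_, ?_, ?_, ?_, ?_, ?_⟩ <;> nlinarith

private lemma M2a (s f g D : ℝ)
    (hs1 : 2.23606797 ≤ s) (hs2 : s ≤ 2.23606798) (hf1 : 3.80422606 ≤ f) (hf2 : f ≤ 3.80422607) (hg1 : 2.351141 ≤ g) (hg2 : g ≤ 2.35114102) (hD1 : 0.8506508 ≤ D) (hD2 : D ≤ 0.85065081) :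
    0.3090169 ≤ f/4*D - g/4*D ∧ f/4*D - g/4*D ≤ 0.3090171 ∧ -0.5000001 ≤ -(g/4*D) ∧ -(g/4*D) ≤ -0.4999999 ∧ 0.9510565 ≤ s*D/2 ∧ s*D/2 ≤ 0.9510566 ∧ 1.5388417 ≤ (5+s)*D/4 ∧ (5+s)*D/4 ≤ 1.5388418 := by
  refine ⟨?_, ?_, ?_, ?_, ?_, ?_, ?_, ?_⟩ <;> nlinarith

private lemma M2n00 (a00 a01 b10 b11 : ℝ)
    (ha001 : 0.3090169 ≤ a00) (ha002 : a00 ≤ 0.3090171) (ha011 : -0.5000001 ≤ a01) (ha012 : a01 ≤ -0.4999999) (hb101 : 0.244341 ≤ b10) (hb102 : b10 ≤ 0.2443413) (hb111 : 0.5382337 ≤ b11) (hb112 : b11 ≤ 0.538234) :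
    0.2884937 ≤ a00*b11 - a01*b10 ∧ a00*b11 - a01*b10 ≤ 0.2884942 := by
  refine ⟨?_, ?_⟩ <;> nlinarith

private lemma M2n01 (a00 a01 b00 b01 : ℝ)
    (ha001 : 0.3090169 ≤ a00) (ha002 : a00 ≤ 0.3090171) (ha011 : -0.5000001 ≤ a01) (ha012 : a01 ≤ -0.4999999) (hb001 : 0.1775241 ≤ b00) (hb002 : b00 ≤ 0.1775243) (hb011 : -0.2269843 ≤ b01) (hb012 : b01 ≤ -0.2269842) :
    -0.0186203 ≤ a01*b00 - a00*b01 ∧ a01*b00 - a00*b01 ≤ -0.01862 := by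
  refine ⟨?_, ?_⟩ <;> nlinarith

private lemma M2n10 (a10 a11 b10 b11 : ℝ)
    (ha101 : 0.9510565 ≤ a10) (ha102 : a10 ≤ 0.9510566) (ha111 : 1.5388417 ≤ a11) (ha112 : a11 ≤ 1.5388418) (hb101 : 0.244341 ≤ b10) (hb102 : b10 ≤ 0.2443413) (hb111 : 0.5382337 ≤ b11) (hb112 : b11 ≤ 0.538234) :
    0.135888 ≤ a10*b11 - a11*b10 ∧ a10*b11 - a11*b10 ≤ 0.1358889 := by
  refine ⟨?_, ?_⟩ <;> nlinarith

private lemma M2n11 (a10 a11 b00 b01 : ℝ)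
    (ha101 : 0.9510565 ≤ a10) (ha102 : a10 ≤ 0.9510566) (ha111 : 1.5388417 ≤ a11) (ha112 : a11 ≤ 1.5388418) (hb001 : 0.1775241 ≤ b00) (hb002 : b00 ≤ 0.1775243) (hb011 : -0.2269843 ≤ b01) (hb012 : b01 ≤ -0.2269842) :
    0.4890562 ≤ a11*b00 - a10*b01 ∧ a11*b00 - a10*b01 ≤ 0.4890568 := by
  refine ⟨?_, ?_⟩ <;> nlinarith

private lemma M2d (b00 b01 b10 b11 : ℝ)
    (hb001 : 0.1775241 ≤ b00) (hb002 : b00 ≤ 0.1775243) (hb011 : -0.2269843 ≤ b01) (hb012 : b01 ≤ -0.2269842) (hb101 : 0.244341 ≤ b10) (hb102 : b10 ≤ 0.2443413) (hb111 : 0.5382337 ≤ b11) (hb112 : b11 ≤ 0.538234) :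
    0.1510109 ≤ b00*b11 - b01*b10 ∧ b00*b11 - b01*b10 ≤ 0.1510113 := by
  refine ⟨?_, ?_⟩ <;> nlinarith

private lemma M1P (n00 n10 dd : ℝ) (h1 : 0.5382335 ≤ n00) (h2 : n00 ≤ 0.5382341)
    (h3 : -4e-07 ≤ n10) (h4 : n10 ≤ 4e-07) (h5 : 0.2443409 ≤ dd) (h6 : dd ≤ 0.2443414) :
    (0.4004646:ℝ) ≤ (3.40:ℝ)^2*dd^2 - (n00^2+n10^2) := by nlinarith

private lemma M1Q (n01 n11 dd : ℝ) (h1 : -4e-07 ≤ n01) (h2 : n01 ≤ 4e-07)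
    (h3 : 0.6985853 ≤ n11) (h4 : n11 ≤ 0.6985861) (h5 : 0.2443409 ≤ dd) (h6 : dd ≤ 0.2443414) :
    (0.202138:ℝ) ≤ (3.40:ℝ)^2*dd^2 - (n01^2+n11^2) := by nlinarith

private lemma M1R (n00 n01 n10 n11 : ℝ)
    (h1 : 0.5382335 ≤ n00) (h2 : n00 ≤ 0.5382341) (h3 : -4e-07 ≤ n01) (h4 : n01 ≤ 4e-07)
    (h5 : -4e-07 ≤ n10) (h6 : n10 ≤ 4e-07) (h7 : 0.6985853 ≤ n11) (h8 : n11 ≤ 0.6985861) :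
    (n00*n01+n10*n11)^2 ≤ (0.4004646:ℝ)*0.202138 := by
  have hl : (-5e-07:ℝ) ≤ n00*n01+n10*n11 := by nlinarith
  have hu : n00*n01+n10*n11 ≤ 5e-07 := by nlinarith
  nlinarith [hl, hu]

private lemma M2P (n00 n10 dd : ℝ) (h1 : 0.2884937 ≤ n00) (h2 : n00 ≤ 0.2884942)
    (h3 : 0.135888 ≤ n10) (h4 : n10 ≤ 0.1358889) (h5 : 0.1510109 ≤ dd) (h6 : dd ≤ 0.1510113) :
    (0.1619229:ℝ) ≤ (3.40:ℝ)^2*dd^2 - (n00^2+n10^2) := by nlinarith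

private lemma M2Q (n01 n11 dd : ℝ) (h1 : -0.0186203 ≤ n01) (h2 : n01 ≤ -0.01862)
    (h3 : 0.4890562 ≤ n11) (h4 : n11 ≤ 0.4890568) (h5 : 0.1510109 ≤ dd) (h6 : dd ≤ 0.1510113) :
    (0.0240943:ℝ) ≤ (3.40:ℝ)^2*dd^2 - (n01^2+n11^2) := by nlinarith

private lemma M2R (n00 n01 n10 n11 : ℝ)
    (h1 : 0.2884937 ≤ n00) (h2 : n00 ≤ 0.2884942) (h3 : -0.0186203 ≤ n01) (h4 : n01 ≤ -0.01862)
    (h5 : 0.135888 ≤ n10) (h6 : n10 ≤ 0.1358889) (h7 : 0.4890562 ≤ n11) (h8 : n11 ≤ 0.4890568) :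
    (n00*n01+n10*n11)^2 ≤ (0.1619229:ℝ)*0.0240943 := by
  have hl : (0.061085:ℝ) ≤ n00*n01+n10*n11 := by nlinarith
  have hu : n00*n01+n10*n11 ≤ 0.0610857 := by nlinarith
  nlinarith [hl, hu]


private lemma M1_num (s f g D x y : ℝ)
    (hs1 : 2.23606797 ≤ s) (hs2 : s ≤ 2.23606798)
    (hf1 : 3.80422606 ≤ f) (hf2 : f ≤ 3.80422607)
    (hg1 : 2.351141 ≤ g) (hg2 : g ≤ 2.35114102)
    (hD1 : 0.8506508 ≤ D) (hD2 : D ≤ 0.85065081)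
    (hx1 : 0.2269842 ≤ x) (hx2 : x ≤ 0.2269843)
    (hy1 : 0.3124169 ≤ y) (hy2 : y ≤ 0.3124171) :
    0 < (x*(1-(s-1)/4) + f/4*y) * (D - (f/4*x + (s-1)/4*y))
        - (f/4*y - (s-1)/4*x) * (y*(1-(s-1)/4) - f/4*x)
    ∧ ∀ v0 v1 : ℝ,
      ((g*D/2*(D - (f/4*x + (s-1)/4*y)) - g*D/4*(y*(1-(s-1)/4) - f/4*x))*v0
        + (g*D/4*(x*(1-(s-1)/4) + f/4*y) - g*D/2*(f/4*y - (s-1)/4*x))*v1)^2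
      + ((0*(D - (f/4*x + (s-1)/4*y)) - (5+s)*D/4*(y*(1-(s-1)/4) - f/4*x))*v0
        + ((5+s)*D/4*(x*(1-(s-1)/4) + f/4*y) - 0*(f/4*y - (s-1)/4*x))*v1)^2
      ≤ (3.40:ℝ)^2*((x*(1-(s-1)/4) + f/4*y) * (D - (f/4*x + (s-1)/4*y))
          - (f/4*y - (s-1)/4*x) * (y*(1-(s-1)/4) - f/4*x))^2*(v0^2+v1^2) := by
  obtain ⟨b00, hb00⟩ : ∃ t, t = x*(1-(s-1)/4) + f/4*y := ⟨_, rfl⟩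
  obtain ⟨b01, hb01⟩ : ∃ t, t = f/4*y - (s-1)/4*x := ⟨_, rfl⟩
  obtain ⟨b10, hb10⟩ : ∃ t, t = y*(1-(s-1)/4) - f/4*x := ⟨_, rfl⟩
  obtain ⟨b11, hb11⟩ : ∃ t, t = D - (f/4*x + (s-1)/4*y) := ⟨_, rfl⟩
  obtain ⟨a00, ha00⟩ : ∃ t, t = g*D/2 := ⟨_, rfl⟩
  obtain ⟨a01, ha01⟩ : ∃ t, t = g*D/4 := ⟨_, rfl⟩
  obtain ⟨a11, ha11⟩ : ∃ t, t = (5+s)*D/4 := ⟨_, rfl⟩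
  rw [← hb00, ← hb01, ← hb10, ← hb11, ← ha00, ← ha01, ← ha11]
  obtain ⟨c1, c2, c3, c4, c5, c6, c7, c8⟩ :=
    M1b s f D x y hs1 hs2 hf1 hf2 hD1 hD2 hx1 hx2 hy1 hy2
  rw [← hb00] at c1 c2; rw [← hb01] at c3 c4; rw [← hb10] at c5 c6; rw [← hb11] at c7 c8
  obtain ⟨d1, d2, d3, d4, d5, d6⟩ := M1a s g D hs1 hs2 hg1 hg2 hD1 hD2
  rw [← ha00] at d1 d2; rw [← ha01] at d3 d4; rw [← ha11] at d5 d6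
  obtain ⟨e1, e2⟩ := M1n00 a00 a01 b10 b11 d1 d2 d3 d4 c5 c6 c7 c8
  obtain ⟨e3, e4⟩ := M1n01 a00 a01 b00 b01 d1 d2 d3 d4 c1 c2 c3 c4
  obtain ⟨e5, e6⟩ := M1n10 a11 b10 b11 d5 d6 c5 c6 c7 c8
  obtain ⟨e7, e8⟩ := M1n11 a11 b00 b01 d5 d6 c1 c2 c3 c4
  obtain ⟨e9, e10⟩ := M1d b00 b01 b10 b11 c1 c2 c3 c4 c5 c6 c7 c8
  refine ⟨by linarith, fun v0 v1 => quad_le _ _ _ _ _ 0.4004646 0.202138 v0 v1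
    (by norm_num) (by norm_num) (M1P _ _ _ e1 e2 e5 e6 e9 e10)
    (M1Q _ _ _ e3 e4 e7 e8 e9 e10) (M1R _ _ _ _ e1 e2 e3 e4 e5 e6 e7 e8)⟩

/-! ### Numeric estimates for `M₂` -/

private lemma M2_num (s e f g D x y : ℝ)
    (hs1 : 2.23606797 ≤ s) (hs2 : s ≤ 2.23606798)
    (he1 : 4.45406545 ≤ e) (he2 : e ≤ 4.45406546)
    (hf1 : 3.80422606 ≤ f) (hf2 : f ≤ 3.80422607)
    (hg1 : 2.351141 ≤ g) (hg2 : g ≤ 2.35114102)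
    (hD1 : 0.8506508 ≤ D) (hD2 : D ≤ 0.85065081)
    (hx1 : 0.2269842 ≤ x) (hx2 : x ≤ 0.2269843)
    (hy1 : 0.3124169 ≤ y) (hy2 : y ≤ 0.3124171) :
    0 < ((1+s)/8 - x) * (D - y) - (-x) * (e/8 - y)
    ∧ ∀ v0 v1 : ℝ,
      (((f/4*D - g/4*D)*(D - y) - (-(g/4*D))*(e/8 - y))*v0
        + ((-(g/4*D))*((1+s)/8 - x) - (f/4*D - g/4*D)*(-x))*v1)^2
      + ((s*D/2*(D - y) - (5+s)*D/4*(e/8 - y))*v0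
        + ((5+s)*D/4*((1+s)/8 - x) - s*D/2*(-x))*v1)^2
      ≤ (3.40:ℝ)^2*(((1+s)/8 - x) * (D - y) - (-x) * (e/8 - y))^2*(v0^2+v1^2) := by
  obtain ⟨b00, hb00⟩ : ∃ t, t = (1+s)/8 - x := ⟨_, rfl⟩
  obtain ⟨b01, hb01⟩ : ∃ t, t = -x := ⟨_, rfl⟩
  obtain ⟨b10, hb10⟩ : ∃ t, t = e/8 - y := ⟨_, rfl⟩
  obtain ⟨b11, hb11⟩ : ∃ t, t = D - y := ⟨_, rfl⟩
  obtain ⟨a00, ha00⟩ : ∃ t, t = f/4*D - g/4*D := ⟨_, rfl⟩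
  obtain ⟨a01, ha01⟩ : ∃ t, t = -(g/4*D) := ⟨_, rfl⟩
  obtain ⟨a10, ha10⟩ : ∃ t, t = s*D/2 := ⟨_, rfl⟩
  obtain ⟨a11, ha11⟩ : ∃ t, t = (5+s)*D/4 := ⟨_, rfl⟩
  rw [← hb00, ← hb01, ← hb10, ← hb11, ← ha00, ← ha01, ← ha10, ← ha11]
  obtain ⟨c1, c2, c3, c4, c5, c6, c7, c8⟩ :=
    M2b s e D x y hs1 hs2 he1 he2 hD1 hD2 hx1 hx2 hy1 hy2
  rw [← hb00] at c1 c2; rw [← hb01] at c3 c4; rw [← hb10] at c5 c6; rw [← hb11] at c7 c8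
  obtain ⟨d1, d2, d3, d4, d5, d6, d7, d8⟩ := M2a s f g D hs1 hs2 hf1 hf2 hg1 hg2 hD1 hD2
  rw [← ha00] at d1 d2; rw [← ha01] at d3 d4; rw [← ha10] at d5 d6; rw [← ha11] at d7 d8
  obtain ⟨e1, e2⟩ := M2n00 a00 a01 b10 b11 d1 d2 d3 d4 c5 c6 c7 c8
  obtain ⟨e3, e4⟩ := M2n01 a00 a01 b00 b01 d1 d2 d3 d4 c1 c2 c3 c4
  obtain ⟨e5, e6⟩ := M2n10 a10 a11 b10 b11 d5 d6 d7 d8 c5 c6 c7 c8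
  obtain ⟨e7, e8⟩ := M2n11 a10 a11 b00 b01 d5 d6 d7 d8 c1 c2 c3 c4
  obtain ⟨e9, e10⟩ := M2d b00 b01 b10 b11 c1 c2 c3 c4 c5 c6 c7 c8
  refine ⟨by linarith, fun v0 v1 => quad_le _ _ _ _ _ 0.1619229 0.0240943 v0 v1
    (by norm_num) (by norm_num) (M2P _ _ _ e1 e2 e5 e6 e9 e10)
    (M2Q _ _ _ e3 e4 e7 e8 e9 e10) (M2R _ _ _ _ e1 e2 e3 e4 e5 e6 e7 e8)⟩

set_option maxHeartbeats 2000000 in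
/-- The linear parts `M₀, M₁, M₂` of the affine substitution map on a tile all have
Euclidean operator norm at most `3.40`. -/
theorem substitution_matrices_norm_le :
    ∀ v : EuclideanSpace ℝ (Fin 2),
      ‖Matrix.toEuclideanLin M0 v‖ ≤ 3.40 * ‖v‖ ∧
      ‖Matrix.toEuclideanLin M1 v‖ ≤ 3.40 * ‖v‖ ∧
      ‖Matrix.toEuclideanLin M2 v‖ ≤ 3.40 * ‖v‖ := by
  have s2 : S5^2 = 5 := Real.sq_sqrt (by norm_num)
  have s_lb : 2.23606797 ≤ S5 := num_le_sqrt _ _ (by norm_num) (by norm_num)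
  have s_ub : S5 ≤ 2.23606798 := sqrt_le_num _ _ (by norm_num) (by norm_num)
  have s_pos : (0:ℝ) < S5 := by linarith
  have h3s : 3 / S5 = (3/5) * S5 := by
    rw [div_eq_iff (ne_of_gt s_pos)]; nlinarith
  have h22s : 22 / S5 = (22/5) * S5 := by
    rw [div_eq_iff (ne_of_gt s_pos)]; nlinarith
  have A_lb : 1.32813102 ≤ SA := num_le_sqrt _ _ (by norm_num) (by nlinarith)
  have A_ub : SA ≤ 1.32813103 := sqrt_le_num _ _ (by norm_num) (by nlinarith)
  have B_lb : 3.07768353 ≤ SB := num_le_sqrt _ _ (by norm_num) (by nlinarith)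
  have B_ub : SB ≤ 3.07768354 := sqrt_le_num _ _ (by norm_num) (by nlinarith)
  have C_lb : 1.82801553 ≤ SC := num_le_sqrt _ _ (by norm_num) (by rw [h3s]; nlinarith)
  have C_ub : SC ≤ 1.82801554 := sqrt_le_num _ _ (by norm_num) (by rw [h3s]; nlinarith)
  have D_lb : 0.8506508 ≤ SD := num_le_sqrt _ _ (by norm_num) (by nlinarith)
  have D_ub : SD ≤ 0.85065081 := sqrt_le_num _ _ (by norm_num) (by nlinarith)
  have E_lb : 4.45406545 ≤ SE := num_le_sqrt _ _ (by norm_num) (by rw [h22s]; nlinarith)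
  have E_ub : SE ≤ 4.45406546 := sqrt_le_num _ _ (by norm_num) (by rw [h22s]; nlinarith)
  have F_lb : 3.80422606 ≤ SF := num_le_sqrt _ _ (by norm_num) (by nlinarith)
  have F_ub : SF ≤ 3.80422607 := sqrt_le_num _ _ (by norm_num) (by nlinarith)
  have G_lb : 2.351141 ≤ SG := num_le_sqrt _ _ (by norm_num) (by nlinarith)
  have G_ub : SG ≤ 2.35114102 := sqrt_le_num _ _ (by norm_num) (by nlinarith)
  have x_lb : 0.2269842 ≤ (S5 - SA)/4 := by linarith
  have x_ub : (S5 - SA)/4 ≤ 0.2269843 := by linarith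
  have y_lb : 0.3124169 ≤ (SB - SC)/4 := by linarith
  have y_ub : (SB - SC)/4 ≤ 0.3124171 := by linarith
  intro v
  refine ⟨?_, ?_, ?_⟩
  · -- M0
    have hn1 : ‖pPt' 1‖ = SD := by
      rw [euc_norm, pPt'1_0, pPt'1_1, show (0:ℝ)^2 + SD^2 = SD^2 by ring,
        Real.sqrt_sq (Real.sqrt_nonneg _)]
    have hn2 : ‖pPt 1‖ = Real.sqrt (((S5 - SA)/4)^2 + ((SB - SC)/4)^2) := by
      rw [euc_norm, pPt1_0, pPt1_1]
    have hden : 0.38616 ≤ Real.sqrt (((S5 - SA)/4)^2 + ((SB - SC)/4)^2) := by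
      refine num_le_sqrt _ _ (by norm_num) ?_
      nlinarith
    have hr : ‖pPt' 1‖ / ‖pPt 1‖ ≤ 3.40 := by
      rw [hn1, hn2, div_le_iff₀ (by linarith : (0:ℝ) <
        Real.sqrt (((S5 - SA)/4)^2 + ((SB - SC)/4)^2))]
      nlinarith
    have hr0 : 0 ≤ ‖pPt' 1‖ / ‖pPt 1‖ := by positivity
    exact opnorm_rot M0 _ (π/5) rfl hr0 hr v
  · -- M1
    have hA1 : colMat (pPt' 4 - pPt' 3) (pPt' 1 - pPt' 3)
        = !![SG*SD/2, SG*SD/4; 0, (5+S5)*SD/4] := by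
      ext i j
      fin_cases i <;> fin_cases j <;>
        simp [colMat, PiLp.sub_apply, pPt'4_0, pPt'4_1, pPt'3_0, pPt'3_1, pPt'1_0, pPt'1_1] <;>
        ring
    have hB1 : colMat (pPt 1 - pPt 2) (pPt' 1 - pPt 2)
        = !![(S5-SA)/4*(1-(S5-1)/4) + SF/4*((SB-SC)/4),
             SF/4*((SB-SC)/4) - (S5-1)/4*((S5-SA)/4);
             (SB-SC)/4*(1-(S5-1)/4) - SF/4*((S5-SA)/4),
             SD - (SF/4*((S5-SA)/4) + (S5-1)/4*((SB-SC)/4))] := by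
      ext i j
      fin_cases i <;> fin_cases j <;>
        simp [colMat, PiLp.sub_apply, pPt1_0, pPt1_1, pPt2_0, pPt2_1, pPt'1_0, pPt'1_1] <;>
        ring
    obtain ⟨hdpos, hquad⟩ := M1_num S5 SF SG SD ((S5-SA)/4) ((SB-SC)/4)
      s_lb s_ub F_lb F_ub G_lb G_ub D_lb D_ub x_lb x_ub y_lb y_ub
    exact opnorm_bound M1 _ _ _ _ _ (assemble _ _ _ _ _ _ _ _ _ _ hA1 hB1) hdpos hquad v
  · -- M2
    have hA2 : colMat (pPt' 5 - pPt' 4) (pPt' 1 - pPt' 4)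
        = !![SF/4*SD - SG/4*SD, -(SG/4*SD); S5*SD/2, (5+S5)*SD/4] := by
      ext i j
      fin_cases i <;> fin_cases j <;>
        simp [colMat, PiLp.sub_apply, pPt'5_0, pPt'5_1, pPt'4_0, pPt'4_1, pPt'1_0, pPt'1_1] <;>
        ring
    have hB2 : colMat (qPt' - pPt 1) (pPt' 1 - pPt 1)
        = !![(1+S5)/8 - (S5-SA)/4, -((S5-SA)/4); SE/8 - (SB-SC)/4, SD - (SB-SC)/4] := by
      ext i j
      fin_cases i <;> fin_cases j <;>
        simp [colMat, PiLp.sub_apply, qPt'_0, qPt'_1, pPt1_0, pPt1_1, pPt'1_0, pPt'1_1] <;>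
        ring
    obtain ⟨hdpos, hquad⟩ := M2_num S5 SE SF SG SD ((S5-SA)/4) ((SB-SC)/4)
      s_lb s_ub E_lb E_ub F_lb F_ub G_lb G_ub D_lb D_ub x_lb x_ub y_lb y_ub
    exact opnorm_bound M2 _ _ _ _ _ (assemble _ _ _ _ _ _ _ _ _ _ hA2 hB2) hdpos hquad v

end
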